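/- Let ρ₁ > 0 be a real number and let m ≥ 2 be an integer. Let A₁ be the symmetric m×m real matrix with (A₁)₁₁ = (A₁)ₘₘ = (11/12)ρ₁, with all other diagonal entries equal to (5/6)ρ₁, with entries equal to ρ₁/12 whenever the row and column indices differ by exactly 1, and with all remaining entries equal to 0. Then A₁ is positive definite; in particular A₁ is invertible. -/

import Mathlib

open scoped Matrix

/-- The almost-tridiagonal matrix `A₁` (corner diagonal entries `(11/12)ρ₁`, interior
diagonal entries `(5/6)ρ₁`, first sub- and super-diagonal entries `ρ₁/12`) is positive
definite; in particular it is invertible. -/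
theorem A1_posDef_and_invertible (ρ₁ : ℝ) (hρ₁ : 0 < ρ₁) (m : ℕ) (hm : 2 ≤ m)
    (A : Matrix (Fin m) (Fin m) ℝ)
    (hA : ∀ i j : Fin m,
      A i j =
        if i = j then
          (if (i : ℕ) = 0 ∨ (i : ℕ) = m - 1 then (11 / 12) * ρ₁ else (5 / 6) * ρ₁)
        else if (i : ℕ) + 1 = (j : ℕ) ∨ (j : ℕ) + 1 = (i : ℕ) then ρ₁ / 12
        else 0) :
    A.PosDef ∧ IsUnit A := by
  have h0m : (0:ℕ) ≠ m - 1 := by omega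
  -- symmetry
  have hsym : A.IsHermitian := by
    ext i j
    simp only [Matrix.conjTranspose_apply, star_trivial]
    rw [hA i j, hA j i]
    by_cases h : i = j
    · simp [h]
    · have h' : j ≠ i := fun hh => h hh.symm
      simp only [h, h', if_false]
      by_cases h2 : (i : ℕ) + 1 = (j : ℕ) ∨ (j : ℕ) + 1 = (i : ℕ)
      · rw [if_pos h2, if_pos h2.symm]
      · rw [if_neg h2, if_neg (fun hh => h2 hh.symm)]
  have hpd : A.PosDef := by
    refine Matrix.PosDef.of_dotProduct_mulVec_pos hsym ?_
    intro x hx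
    -- extend x to ℕ
    set f : ℕ → ℝ := fun n => if h : n < m then x ⟨n, h⟩ else 0 with hf
    have hfx : ∀ i : Fin m, x i = f i := by
      intro i; simp [hf, i.isLt]
    -- entry formula on ℕ, decomposed
    have hAentry : ∀ i j : Fin m, A i j =
        (if (i:ℕ) = (j:ℕ) then
          ((5/6)*ρ₁ + (if (i:ℕ) = 0 then ρ₁/12 else 0)
            + (if (i:ℕ) = m-1 then ρ₁/12 else 0)) else 0)
        + (if (i:ℕ)+1 = (j:ℕ) then ρ₁/12 else 0)
        + (if (j:ℕ)+1 = (i:ℕ) then ρ₁/12 else 0) := by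
      intro i j
      rw [hA i j]
      by_cases h : i = j
      · subst h
        have hne : ¬ ((i:ℕ)+1 = (i:ℕ)) := by omega
        by_cases h0 : (i:ℕ) = 0 <;> by_cases h1 : (i:ℕ) = m-1
        · omega
        all_goals
          simp [h0, h1, hne, (show ¬((0:ℕ) = m-1) by omega), (show ¬(m-1 = 0) by omega)]
          try ring
      · have hne : (i:ℕ) ≠ (j:ℕ) := fun hh => h (Fin.ext hh)
        simp only [h, if_false, hne, if_false, zero_add]
        by_cases h2 : (i:ℕ)+1 = (j:ℕ)
        · have h3 : ¬ ((j:ℕ)+1 = (i:ℕ)) := by omega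
          simp [h2, h3]
        · by_cases h3 : (j:ℕ)+1 = (i:ℕ)
          · simp [h2, h3]
          · simp [h2, h3]
    -- the quadratic form
    have hQ : star x ⬝ᵥ A *ᵥ x
        = ∑ i ∈ Finset.range m, ∑ j ∈ Finset.range m,
            f i * (((if i = j then
              ((5/6)*ρ₁ + (if i = 0 then ρ₁/12 else 0)
                + (if i = m-1 then ρ₁/12 else 0)) else 0)
            + (if i+1 = j then ρ₁/12 else 0)
            + (if j+1 = i then ρ₁/12 else 0)) * f j) := by
      simp only [dotProduct, Matrix.mulVec, star_trivial, Pi.star_apply,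
        star_trivial]
      rw [← Fin.sum_univ_eq_sum_range]
      refine Finset.sum_congr rfl fun i _ => ?_
      rw [Finset.mul_sum, ← Fin.sum_univ_eq_sum_range]
      refine Finset.sum_congr rfl fun j _ => ?_
      rw [hAentry i j, hfx i, hfx j]
      try ring
    set T : ℝ := ∑ i ∈ Finset.range m, f i ^ 2 with hT
    set S : ℝ := ∑ i ∈ Finset.range (m-1), f i * f (i+1) with hS
    -- evaluate the double sum
    have hQ2 : star x ⬝ᵥ A *ᵥ x
        = (5/6)*ρ₁*T + (ρ₁/12)*(f 0^2 + f (m-1)^2) + (ρ₁/6)*S := by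
      rw [hQ]
      have hsplit : ∀ i ∈ Finset.range m,
          (∑ j ∈ Finset.range m,
            f i * (((if i = j then
              ((5/6)*ρ₁ + (if i = 0 then ρ₁/12 else 0)
                + (if i = m-1 then ρ₁/12 else 0)) else 0)
            + (if i+1 = j then ρ₁/12 else 0)
            + (if j+1 = i then ρ₁/12 else 0)) * f j))
          = f i * ((5/6)*ρ₁ + (if i = 0 then ρ₁/12 else 0)
                + (if i = m-1 then ρ₁/12 else 0)) * f i
            + (if i+1 < m then f i * (ρ₁/12) * f (i+1) else 0)
            + (if 1 ≤ i ∧ i ≤ m then f i * (ρ₁/12) * f (i-1) else 0) := by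
        intro i hi
        rw [Finset.mem_range] at hi
        have e1 : (∑ j ∈ Finset.range m,
            f i * (((if i = j then
              ((5/6)*ρ₁ + (if i = 0 then ρ₁/12 else 0)
                + (if i = m-1 then ρ₁/12 else 0)) else 0)
            + (if i+1 = j then ρ₁/12 else 0)
            + (if j+1 = i then ρ₁/12 else 0)) * f j))
            = (∑ j ∈ Finset.range m, if i = j then
                f i * ((5/6)*ρ₁ + (if i = 0 then ρ₁/12 else 0)
                + (if i = m-1 then ρ₁/12 else 0)) * f j else 0)
            + (∑ j ∈ Finset.range m, if i+1 = j then f i * (ρ₁/12) * f j else 0)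
            + (∑ j ∈ Finset.range m, if j+1 = i then f i * (ρ₁/12) * f j else 0) := by
          rw [← Finset.sum_add_distrib, ← Finset.sum_add_distrib]
          refine Finset.sum_congr rfl fun j _ => ?_
          by_cases h1 : i = j <;> by_cases h2 : i+1 = j <;> by_cases h3 : j+1 = i <;>
            simp [h1, h2, h3] <;> ring
        rw [e1]
        congr 1
        · congr 1
          · rw [Finset.sum_ite_eq (Finset.range m) i
              (fun j => f i * ((5/6)*ρ₁ + (if i = 0 then ρ₁/12 else 0)
                + (if i = m-1 then ρ₁/12 else 0)) * f j)]
            simp [hi]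
          · rw [Finset.sum_ite_eq (Finset.range m) (i+1)
              (fun j => f i * (ρ₁/12) * f j)]
            simp [Finset.mem_range]
        · have : ∀ j, (j+1 = i) ↔ (1 ≤ i ∧ j = i - 1) := by intro j; omega
          simp only [this]
          by_cases h1 : 1 ≤ i
          · simp only [h1, true_and]
            rw [Finset.sum_ite_eq' (Finset.range m) (i-1)
              (fun j => f i * (ρ₁/12) * f j)]
            have hmem : i - 1 ∈ Finset.range m := by rw [Finset.mem_range]; omega
            rw [if_pos hmem, if_pos (Nat.le_of_lt hi)]
          · simp [h1]
      rw [Finset.sum_congr rfl hsplit]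
      rw [Finset.sum_add_distrib, Finset.sum_add_distrib]
      -- diagonal part
      have hdiag : (∑ i ∈ Finset.range m,
          f i * ((5/6)*ρ₁ + (if i = 0 then ρ₁/12 else 0)
            + (if i = m-1 then ρ₁/12 else 0)) * f i)
          = (5/6)*ρ₁*T + (ρ₁/12)*(f 0^2 + f (m-1)^2) := by
        have e : ∀ i ∈ Finset.range m,
            f i * ((5/6)*ρ₁ + (if i = 0 then ρ₁/12 else 0)
              + (if i = m-1 then ρ₁/12 else 0)) * f i
            = (5/6)*ρ₁ * f i ^2 + (if i = 0 then (ρ₁/12) * f 0 ^2 else 0)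
              + (if i = m-1 then (ρ₁/12) * f (m-1) ^2 else 0) := by
          intro i _
          by_cases h1 : i = 0 <;> by_cases h2 : i = m-1
          · omega
          all_goals
            simp [h1, h2, (show ¬((0:ℕ) = m-1) by omega), (show ¬(m-1 = 0) by omega)]
            try ring
        rw [Finset.sum_congr rfl e, Finset.sum_add_distrib, Finset.sum_add_distrib]
        rw [Finset.sum_ite_eq' (Finset.range m) 0 (fun i => (ρ₁/12) * f 0 ^2),
          Finset.sum_ite_eq' (Finset.range m) (m-1) (fun i => (ρ₁/12) * f (m-1) ^2)]
        have h1 : (0:ℕ) ∈ Finset.range m := by rw [Finset.mem_range]; omega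
        have h2 : m-1 ∈ Finset.range m := by rw [Finset.mem_range]; omega
        rw [if_pos h1, if_pos h2, hT, Finset.mul_sum]
        ring
      -- super-diagonal part
      have hsup : (∑ i ∈ Finset.range m,
          if i+1 < m then f i * (ρ₁/12) * f (i+1) else 0)
          = (ρ₁/12) * S := by
        rw [hS, Finset.mul_sum]
        rw [← Finset.sum_subset (Finset.range_subset_range.mpr (by omega : m-1 ≤ m))]
        · refine Finset.sum_congr rfl fun i hi => ?_
          rw [Finset.mem_range] at hi
          rw [if_pos (by omega)]; ring
        · intro i hi hni
          rw [Finset.mem_range] at hi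
          rw [Finset.mem_range] at hni
          rw [if_neg (by omega)]
      -- sub-diagonal part
      have hsub : (∑ i ∈ Finset.range m,
          if 1 ≤ i ∧ i ≤ m then f i * (ρ₁/12) * f (i-1) else 0)
          = (ρ₁/12) * S := by
        rw [hS, Finset.mul_sum]
        have e : ∀ i ∈ Finset.range m,
            (if 1 ≤ i ∧ i ≤ m then f i * (ρ₁/12) * f (i-1) else 0)
            = if 1 ≤ i then f (i-1) * (ρ₁/12) * f i else 0 := by
          intro i hi
          rw [Finset.mem_range] at hi
          by_cases h : 1 ≤ i
          · rw [if_pos ⟨h, by omega⟩, if_pos h]; ring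
          · rw [if_neg (by omega), if_neg h]
        rw [Finset.sum_congr rfl e]
        have hm' : m = (m-1) + 1 := by omega
        rw [hm', Finset.sum_range_succ']
        simp only [Nat.add_sub_cancel]
        have : (if (1:ℕ) ≤ 0 then f (0-1) * (ρ₁/12) * f 0 else 0) = 0 := by simp
        rw [this, add_zero]
        refine Finset.sum_congr rfl fun i _ => ?_
        rw [if_pos (by omega)]
        ring
      rw [hdiag, hsup, hsub]
      ring
    -- positivity
    have hP : ∑ i ∈ Finset.range (m-1), (f i + f (i+1))^2
        = (T - f (m-1)^2) + (T - f 0^2) + 2*S := by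
      have e : ∀ i ∈ Finset.range (m-1), (f i + f (i+1))^2
          = f i ^2 + f (i+1)^2 + 2*(f i * f (i+1)) := by
        intro i _; ring
      rw [Finset.sum_congr rfl e, Finset.sum_add_distrib, Finset.sum_add_distrib]
      have hA1 : ∑ i ∈ Finset.range (m-1), f i ^2 = T - f (m-1)^2 := by
        have hm' : m = (m-1) + 1 := by omega
        rw [hT, hm', Finset.sum_range_succ]
        ring_nf
        simp [Nat.add_sub_cancel]
      have hB1 : ∑ i ∈ Finset.range (m-1), f (i+1) ^2 = T - f 0^2 := by
        have hm' : m = (m-1) + 1 := by omega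
        conv_rhs => rw [hT, hm', Finset.sum_range_succ']
        ring
      rw [hA1, hB1, ← Finset.mul_sum, hS]
    have hQ3 : star x ⬝ᵥ A *ᵥ x
        = (2/3)*ρ₁*T + (ρ₁/6)*(f 0^2 + f (m-1)^2)
          + (ρ₁/12) * ∑ i ∈ Finset.range (m-1), (f i + f (i+1))^2 := by
      rw [hQ2, hP]; ring
    have hT0 : 0 < T := by
      obtain ⟨k, hk⟩ : ∃ k, x k ≠ 0 := Function.ne_iff.mp hx
      rw [hT]
      refine Finset.sum_pos' (fun i _ => sq_nonneg _) ⟨(k:ℕ), Finset.mem_range.mpr k.isLt, ?_⟩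
      have hk' : f (k:ℕ) = x k := (hfx k).symm
      rw [hk']
      exact lt_of_le_of_ne (sq_nonneg _) (Ne.symm (pow_ne_zero 2 hk))
    rw [hQ3]
    have h1 : 0 ≤ (ρ₁/6)*(f 0^2 + f (m-1)^2) := by positivity
    have h2 : 0 ≤ (ρ₁/12) * ∑ i ∈ Finset.range (m-1), (f i + f (i+1))^2 := by
      refine mul_nonneg (by positivity) (Finset.sum_nonneg fun i _ => sq_nonneg _)
    have h3 : 0 < (2/3)*ρ₁*T := by positivity
    linarith
  exact ⟨hpd, hpd.isUnit⟩
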